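/- Let F be a number field, E/F a finite extension, 𝔭 a finite place of F, and l, k positive integers. Suppose ν: (∏₁ⁿ E_𝔭^×) → T(F_𝔭) and μ: T(F_𝔭) → ∏₁ⁿ E_𝔭^× are continuous group homomorphisms with ν ∘ μ = [l] (the l-th power map on T(F_𝔭)), and let C be an open subgroup of ker ν. Then C · μ([k]T(F_𝔭)) is an open subgroup of ∏₁ⁿ E_𝔭^× for the 𝔭-adic topology, where E_𝔭 = E ⊗_F F_𝔭. -/

import Mathlib

open IsDedekindDomain NumberField Multiplicative Filter Topology
open scoped WithZero

section Helpers

lemma zm_div_le_div {a b : ℤᵐ⁰} (c : ℤᵐ⁰) (hc : c ≠ 0) (h : a ≤ b) : a / c ≤ b / c := by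
  rw [div_le_iff₀ (zero_lt_iff.mpr hc), div_mul_cancel₀ _ hc]; exact h

lemma zm_exists_pow_lt {r : ℤᵐ⁰} (hr0 : r ≠ 0) (hr1 : r < 1) (γ : ℤᵐ⁰ˣ) :
    ∃ N : ℕ, ∀ n ≥ N, r ^ n < (γ : ℤᵐ⁰) := by
  obtain ⟨x, hx⟩ := WithZero.ne_zero_iff_exists.mp hr0
  obtain ⟨y, hy⟩ := WithZero.ne_zero_iff_exists.mp γ.ne_zero
  have hi1 : Multiplicative.toAdd x ≤ -1 := by
    have h' : (x : ℤᵐ⁰) < ((1 : Multiplicative ℤ) : ℤᵐ⁰) := by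
      rw [hx, WithZero.coe_one]; exact hr1
    rw [WithZero.coe_lt_coe, ← Multiplicative.toAdd_lt] at h'
    have : Multiplicative.toAdd x < 0 := by simpa using h'
    omega
  refine ⟨(Multiplicative.toAdd y).natAbs + 1, fun n hn => ?_⟩
  rw [← hx, ← hy, ← WithZero.coe_pow, WithZero.coe_lt_coe, ← Multiplicative.toAdd_lt,
    toAdd_pow]
  have h1 : (n:ℤ) * Multiplicative.toAdd x ≤ (n:ℤ) * (-1) :=
    mul_le_mul_of_nonneg_left hi1 (by positivity)
  have h2 : -((Multiplicative.toAdd y).natAbs : ℤ) ≤ Multiplicative.toAdd y :=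
    neg_abs_le _ |>.trans_eq' (by rw [Int.abs_eq_natAbs])
  have h3 : ((Multiplicative.toAdd y).natAbs + 1 : ℤ) ≤ n := by exact_mod_cast hn
  have h4 : (n • Multiplicative.toAdd x : ℤ) = n * Multiplicative.toAdd x := nsmul_eq_mul _ _
  omega

lemma zm_ball_mem_nhds {K : Type*} [Field K] [Valued K ℤᵐ⁰] (x : K) {γ : ℤᵐ⁰}
    (hγ : γ ≠ 0) : {y : K | Valued.v (y - x) < γ} ∈ 𝓝 x := by
  rw [Valued.mem_nhds]
  by_cases h : ∃ a : K, a ≠ 0 ∧ Valued.v a < 1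
  · obtain ⟨a, ha0, ha1⟩ := h
    obtain ⟨N, hN⟩ := zm_exists_pow_lt (Valued.v.ne_zero_iff.mpr ha0) ha1 (Units.mk0 γ hγ)
    refine ⟨Units.mk0 (Valued.v.restrict (a ^ N)) ?_, fun y hy => ?_⟩
    · rw [Ne, Valuation.restrict_eq_zero_iff]
      exact Valued.v.ne_zero_iff.mpr (pow_ne_zero _ ha0)
    · simp only [Set.mem_setOf_eq, Units.val_mk0] at hy ⊢
      rw [Valuation.restrict_lt_iff, map_pow] at hy
      exact hy.trans (hN N le_rfl)
  · push_neg at h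
    refine ⟨1, fun y hy => ?_⟩
    simp only [Set.mem_setOf_eq, Units.val_one] at hy ⊢
    rw [Valuation.restrict_lt_one_iff] at hy
    by_contra hne
    have hz : y - x ≠ 0 := by
      intro h0; apply hne; rw [h0, map_zero]; exact zero_lt_iff.mpr hγ
    exact absurd (h _ hz) (not_le.mpr hy)

lemma zm_exists_of_mem_nhds {K : Type*} [Field K] [Valued K ℤᵐ⁰] {s : Set K} {x : K}
    (hs : s ∈ 𝓝 x) : ∃ γ : ℤᵐ⁰ˣ, {y : K | Valued.v (y - x) < (γ : ℤᵐ⁰)} ⊆ s := by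
  obtain ⟨γ, hγ⟩ := Valued.mem_nhds.mp hs
  refine ⟨Units.map (MonoidWithZeroHom.ValueGroup₀.embedding).toMonoidHom γ, fun y hy => hγ ?_⟩
  show Valued.v.restrict (y - x) < γ.1
  rw [Valuation.restrict_lt_iff_lt_embedding]
  exact hy

theorem newton_step_id {K : Type*} [Field K] (m : ℕ) (a h : K) (hm : 1 ≤ m) :
    (a - h) ^ m = (∑ j ∈ Finset.range (m - 1),
        a ^ j * (-h) ^ (m - j - 2) * (m.choose j : K)) * h ^ 2
      + (m : K) * a ^ (m - 1) * (-h) + a ^ m := by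
  have key := add_pow a (-h) m
  have hm1 : m + 1 = (m - 1) + 1 + 1 := by omega
  rw [sub_eq_add_neg, key, hm1, Finset.sum_range_succ, Finset.sum_range_succ]
  have h1 : m - 1 + 1 = m := by omega
  have h2 : m - (m - 1) = 1 := by omega
  rw [h1, h2]
  have h3 : m.choose (m - 1) = m := by
    rw [← Nat.choose_symm (by omega : m - 1 ≤ m)]
    simp [h2]
  rw [h3, Nat.sub_self, Nat.choose_self]
  have h4 : ∀ j ∈ Finset.range (m - 1),
      a ^ j * (-h) ^ (m - j) * (m.choose j : K)
        = (a ^ j * (-h) ^ (m - j - 2) * (m.choose j : K)) * h ^ 2 := by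
    intro j hj
    rw [Finset.mem_range] at hj
    have : (-h) ^ (m - j) = (-h) ^ (m - j - 2) * h ^ 2 := by
      conv_lhs => rw [show m - j = (m - j - 2) + 2 by omega]
      rw [pow_add]; ring
    rw [this]; ring
  rw [Finset.sum_congr rfl h4, ← Finset.sum_mul]
  push_cast
  ring

lemma val_natCast_le_one {K : Type*} [Field K] [Valued K ℤᵐ⁰] (j : ℕ) :
    Valued.v (j : K) ≤ 1 := by
  induction j with
  | zero => simp
  | succ n ih =>
    push_cast
    exact le_trans (Valuation.map_add_le Valued.v ih (by simp)) (by simp)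

/-- Newton sequence for `X^m - u` starting at 1. -/
noncomputable def newtonSeq {K : Type*} [Field K] (m : ℕ) (u : K) : ℕ → K
  | 0 => 1
  | n + 1 =>
    newtonSeq m u n - ((newtonSeq m u n) ^ m - u) / ((m : K) * (newtonSeq m u n) ^ (m - 1))

/-- Hensel's lemma for the polynomial `X^m - u` over a complete field with a
`ℤᵐ⁰`-valuation: any `u` sufficiently close to `1` has an `m`-th root close to `1`. -/
theorem hensel_pow_root {K : Type*} [Field K] [Valued K ℤᵐ⁰] [CompleteSpace K]
    {m : ℕ} (hm : 1 ≤ m) (hmK : (m : K) ≠ 0) {u : K}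
    (hu : Valued.v (u - 1) < (Valued.v (m : K)) * (Valued.v (m : K))) :
    ∃ g : K, g ^ m = u ∧ Valued.v (g - 1) ≤ Valued.v (u - 1) / Valued.v (m : K) := by
  set v : Valuation K ℤᵐ⁰ := Valued.v with hv
  set M : ℤᵐ⁰ := v ((m : K)) with hM
  have hM0 : M ≠ 0 := v.ne_zero_iff.mpr hmK
  have hM1 : M ≤ 1 := val_natCast_le_one m
  set t : ℤᵐ⁰ := v (u - 1) with ht
  by_cases ht0 : t = 0
  · have h1 : u = 1 := sub_eq_zero.mp (v.zero_iff.mp ht0)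
    exact ⟨1, by rw [one_pow, h1], by simpa using (by simp [ht0] : (0:ℤᵐ⁰) ≤ t / M)⟩
  set r : ℤᵐ⁰ := t / (M * M) with hr
  have hMM0 : M * M ≠ 0 := mul_ne_zero hM0 hM0
  have hr0 : r ≠ 0 := div_ne_zero ht0 hMM0
  have htr : t = r * (M * M) := by rw [hr, div_mul_cancel₀ _ hMM0]
  have hr1 : r < 1 := by
    rw [hr, div_lt_iff₀ (zero_lt_iff.mpr hMM0), one_mul]; exact hu
  have hrle1 : r ≤ 1 := le_of_lt hr1
  have htM : t / M = r * M := by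
    rw [htr, mul_div_assoc, mul_div_cancel_right₀ _ hM0]
  have htM_lt : t / M < M := by
    rw [div_lt_iff₀ (zero_lt_iff.mpr hM0)]; exact hu
  have ht1 : t < 1 := lt_of_lt_of_le hu (by simpa using mul_le_mul' hM1 hM1)
  set a : ℕ → K := newtonSeq m u with ha
  -- the Newton step
  have step : ∀ b : K, v (b - 1) ≤ t / M → v (b ^ m - u) ≤ t →
      v ((b ^ m - u) / ((m : K) * b ^ (m - 1))) = v (b ^ m - u) / M ∧
      v ((b - (b ^ m - u) / ((m : K) * b ^ (m - 1))) ^ m - u)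
        ≤ (v (b ^ m - u) / M) * (v (b ^ m - u) / M) := by
    intro b hb1 hbf
    have hb1M : v (b - 1) < M := lt_of_le_of_lt hb1 htM_lt
    have hb1lt1 : v (b - 1) < 1 := lt_of_lt_of_le hb1M hM1
    have hvb : v b = 1 := by
      have h' : v (1 + (b - 1)) = v (1 : K) :=
        Valuation.map_add_eq_of_lt_left v (by simpa using hb1lt1)
      simpa using h'
    have hbne : b ≠ 0 := v.ne_zero_iff.mp (by rw [hvb]; exact one_ne_zero)
    have hvd : v ((m : K) * b ^ (m - 1)) = M := by
      rw [map_mul, map_pow, hvb, one_pow, mul_one]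
    have hdne : (m : K) * b ^ (m - 1) ≠ 0 := v.ne_zero_iff.mp (by rw [hvd]; exact hM0)
    set h : K := (b ^ m - u) / ((m : K) * b ^ (m - 1)) with hh
    have hvh : v h = v (b ^ m - u) / M := by rw [hh, map_div₀, hvd]
    have hvh1 : v h ≤ 1 := by
      rw [hvh]
      exact le_trans (zm_div_le_div M hM0 hbf) (le_trans (le_of_lt htM_lt) hM1)
    refine ⟨hvh, ?_⟩
    have hid := newton_step_id m b h hm
    have hdh : (m : K) * b ^ (m - 1) * h = b ^ m - u := by
      rw [hh, mul_div_cancel₀ _ hdne]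
    have hmid : (m : K) * b ^ (m - 1) * (-h) = -(b ^ m - u) := by
      rw [← hdh]; ring
    have hkey : (b - h) ^ m - u = (∑ j ∈ Finset.range (m - 1),
        b ^ j * (-h) ^ (m - j - 2) * (m.choose j : K)) * h ^ 2 := by
      rw [hid, hmid]; ring
    have hS : v (∑ j ∈ Finset.range (m - 1),
        b ^ j * (-h) ^ (m - j - 2) * (m.choose j : K)) ≤ 1 := by
      apply Valuation.map_sum_le
      intro j hj
      rw [map_mul, map_mul, map_pow, map_pow, hvb, one_pow, Valuation.map_neg, one_mul]
      exact mul_le_one' (pow_le_one' hvh1 _) (val_natCast_le_one _)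
    calc v ((b - h) ^ m - u) = v _ * v h ^ 2 := by rw [hkey, map_mul, map_pow]
      _ ≤ 1 * v h ^ 2 := mul_le_mul_left hS _
      _ = v h * v h := by rw [one_mul, sq]
      _ = (v (b ^ m - u) / M) * (v (b ^ m - u) / M) := by rw [hvh]
  -- invariant
  have inv : ∀ n, v (a n - 1) ≤ t / M ∧ v (a n ^ m - u) ≤ t * r ^ n := by
    intro n
    induction n with
    | zero =>
      constructor
      · show v ((1:K) - 1) ≤ t / M
        simp
      · show v ((1:K) ^ m - u) ≤ t * r ^ 0
        rw [one_pow, v.map_sub_swap, pow_zero, mul_one]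
    | succ n ih =>
      have hfa_t : v (a n ^ m - u) ≤ t :=
        le_trans ih.2 (by simpa using mul_le_mul_right (pow_le_one' hrle1 n) t)
      obtain ⟨hs1, hs2⟩ := step (a n) ih.1 hfa_t
      have hne : a (n+1) = a n - (a n ^ m - u) / ((m : K) * a n ^ (m - 1)) := rfl
      have hvh_le : v ((a n ^ m - u) / ((m : K) * a n ^ (m - 1))) ≤ t / M := by
        rw [hs1]; exact zm_div_le_div M hM0 hfa_t
      constructor
      · have e : a (n+1) - 1 = (a n - 1) - (a n ^ m - u) / ((m : K) * a n ^ (m - 1)) := by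
          rw [hne]; ring
        rw [e]
        exact le_trans (v.map_sub _ _) (max_le ih.1 hvh_le)
      · rw [hne]
        refine le_trans hs2 ?_
        have hfa_le : v (a n ^ m - u) / M ≤ (r * M) * r ^ n := by
          refine le_trans (zm_div_le_div M hM0 ih.2) ?_
          rw [mul_div_right_comm, htM]
        refine le_trans (mul_le_mul' hfa_le hfa_le) ?_
        calc ((r * M) * r ^ n) * ((r * M) * r ^ n) = (t * r ^ (n+1)) * r ^ n := by
              rw [htr]; simp only [pow_succ]
              simp [mul_comm, mul_assoc, mul_left_comm]
          _ ≤ (t * r ^ (n+1)) * 1 := mul_le_mul_right (pow_le_one' hrle1 n) _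
          _ = t * r ^ (n+1) := mul_one _
  -- consecutive differences
  have hdiff : ∀ n, v (a (n+1) - a n) ≤ M * r ^ (n+1) := by
    intro n
    have hfa_t : v (a n ^ m - u) ≤ t :=
      le_trans (inv n).2 (by simpa using mul_le_mul_right (pow_le_one' hrle1 n) t)
    have h1 : a (n+1) - a n = -((a n ^ m - u) / ((m : K) * a n ^ (m - 1))) := by
      show a n - _ - a n = _
      rw [sub_sub_cancel_left]
    rw [h1, Valuation.map_neg, (step (a n) (inv n).1 hfa_t).1]
    refine le_trans (zm_div_le_div M hM0 (inv n).2) ?_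
    rw [mul_div_right_comm, htM]
    refine le_of_eq ?_
    simp only [pow_succ]
    simp [mul_comm, mul_assoc, mul_left_comm]
  have hrpow_anti : ∀ {i j : ℕ}, i ≤ j → r ^ j ≤ r ^ i := by
    intro i j hij
    have e : r ^ j = r ^ i * r ^ (j - i) := by rw [← pow_add]; congr 1; omega
    rw [e]
    exact mul_le_of_le_one_right' (pow_le_one' hrle1 _)
  have hdist : ∀ p n, p ≤ n → v (a n - a p) ≤ r ^ (p + 1) := by
    intro p n
    induction n with
    | zero =>
      intro hp
      have : p = 0 := Nat.le_zero.mp hp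
      subst this
      simp
    | succ n ihn =>
      intro hpn
      rcases Nat.lt_or_ge p (n+1) with hlt | hge
      · have h2 := ihn (by omega)
        have e : a (n+1) - a p = (a (n+1) - a n) + (a n - a p) := by ring
        rw [e]
        refine le_trans (v.map_add _ _) (max_le ?_ h2)
        refine le_trans (hdiff n) ?_
        exact le_trans (mul_le_of_le_one_left' hM1) (hrpow_anti (by omega))
      · have : p = n + 1 := by omega
        subst this
        simp
  have hcauchy : CauchySeq a := by
    rw [(Valued.hasBasis_uniformity K ℤᵐ⁰).cauchySeq_iff]
    intro γ _
    obtain ⟨N, hN⟩ := zm_exists_pow_lt hr0 hr1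
      (Units.map (MonoidWithZeroHom.ValueGroup₀.embedding).toMonoidHom γ)
    refine ⟨N, fun p hp q hq => ?_⟩
    show Valued.v.restrict (a q - a p) < γ.1
    rw [Valuation.restrict_lt_iff_lt_embedding]
    rcases le_total p q with h | h
    · exact lt_of_le_of_lt (hdist p q h) (hN (p+1) (by omega))
    · show v (a q - a p) < _
      rw [v.map_sub_swap]
      exact lt_of_le_of_lt (hdist q p h) (hN (q+1) (by omega))
  obtain ⟨b, hb⟩ := cauchySeq_tendsto_of_complete hcauchy
  have hroot : b ^ m = u := by
    by_contra hne
    have h0 : v (b ^ m - u) ≠ 0 := v.ne_zero_iff.mpr (sub_ne_zero.mpr hne)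
    set γ : ℤᵐ⁰ˣ := Units.mk0 _ h0 with hγ
    have hbm : Tendsto (fun n => a n ^ m) atTop (𝓝 (b ^ m)) := hb.pow m
    have hball : {y : K | v (y - b ^ m) < (γ : ℤᵐ⁰)} ∈ 𝓝 (b ^ m) := by
      exact zm_ball_mem_nhds _ γ.ne_zero
    have h1 : ∀ᶠ n in atTop, v (a n ^ m - b ^ m) < (γ : ℤᵐ⁰) := hbm.eventually_mem hball
    obtain ⟨N, hN⟩ := zm_exists_pow_lt hr0 hr1 γ
    obtain ⟨n, hn1, hn2⟩ := (h1.and (eventually_atTop.mpr ⟨N, fun n hn => hN n hn⟩)).exists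
    have e : b ^ m - u = (b ^ m - a n ^ m) + (a n ^ m - u) := by ring
    have hle : v (b ^ m - u) ≤ max (v (b ^ m - a n ^ m)) (v (a n ^ m - u)) := by
      rw [e]; exact v.map_add _ _
    have c1 : v (b ^ m - a n ^ m) < (γ : ℤᵐ⁰) := by rw [v.map_sub_swap]; exact hn1
    have c2 : v (a n ^ m - u) < (γ : ℤᵐ⁰) := by
      refine lt_of_le_of_lt ((inv n).2.trans ?_) hn2
      simpa using mul_le_mul_left (le_of_lt ht1) (r ^ n)
    have : v (b ^ m - u) < (γ : ℤᵐ⁰) := lt_of_le_of_lt hle (max_lt c1 c2)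
    simp [hγ] at this
  have hclose : v (b - 1) ≤ t / M := by
    by_contra hgt
    rw [not_le] at hgt
    have h0 : v (b - 1) ≠ 0 := by
      intro h'
      rw [h'] at hgt
      exact not_lt_zero' hgt
    set γ : ℤᵐ⁰ˣ := Units.mk0 _ h0 with hγ
    have hball : {y : K | v (y - b) < (γ : ℤᵐ⁰)} ∈ 𝓝 b := by
      exact zm_ball_mem_nhds _ γ.ne_zero
    obtain ⟨n, hn⟩ := (hb.eventually_mem hball).exists
    have hle : v (b - 1) ≤ max (v (b - a n)) (v (a n - 1)) := by
      have e : b - 1 = (b - a n) + (a n - 1) := by ring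
      rw [e]; exact v.map_add _ _
    have c1 : v (b - a n) < v (b - 1) := by
      rw [v.map_sub_swap]; exact hn
    have c2 : v (a n - 1) < v (b - 1) := lt_of_le_of_lt (inv n).1 hgt
    exact absurd (lt_of_le_of_lt hle (max_lt c1 c2)) (lt_irrefl _)
  exact ⟨b, hroot, hclose⟩

lemma units_nhds_decomp {M : Type*} [Monoid M] [TopologicalSpace M] {W : Set Mˣ}
    (hW : W ∈ 𝓝 (1 : Mˣ)) :
    ∃ A B : Set M, A ∈ 𝓝 1 ∧ B ∈ 𝓝 1 ∧
      ∀ g : Mˣ, (g : M) ∈ A → ((g⁻¹ : Mˣ) : M) ∈ B → g ∈ W := by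
  rw [nhds_induced (Units.embedProduct M) 1, Filter.mem_comap] at hW
  obtain ⟨S, hS, hSW⟩ := hW
  rw [show Units.embedProduct M 1 = ((1 : M), MulOpposite.op (1 : M)) from rfl,
    mem_nhds_prod_iff] at hS
  obtain ⟨A, hA, B', hB', hAB⟩ := hS
  refine ⟨A, MulOpposite.op ⁻¹' B', hA,
    MulOpposite.continuous_op.continuousAt.preimage_mem_nhds hB', ?_⟩
  intro g hgA hgB
  exact hSW (hAB ⟨hgA, hgB⟩)

lemma val_eq_one_of {K : Type*} [Field K] [Valued K ℤᵐ⁰] {x : K}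
    (h : Valued.v (x - 1) < 1) : Valued.v x = 1 := by
  have e : (1 : K) + (x - 1) = x := by ring
  have h' : Valued.v ((1:K) + (x - 1)) = Valued.v (1 : K) :=
    Valuation.map_add_eq_of_lt_left _ (by simpa using h)
  rw [e] at h'
  simpa using h'

lemma val_inv_sub_one {K : Type*} [Field K] [Valued K ℤᵐ⁰] {x : K}
    (h : Valued.v (x - 1) < 1) : Valued.v (x⁻¹ - 1) = Valued.v (x - 1) := by
  have hvx : Valued.v x = 1 := val_eq_one_of h
  have hx0 : x ≠ 0 := Valued.v.ne_zero_iff.mp (by rw [hvx]; exact one_ne_zero)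
  have e : x⁻¹ - 1 = (1 - x) * x⁻¹ := by field_simp
  rw [e, map_mul, map_inv₀, hvx, inv_one, mul_one, Valuation.map_sub_swap]

theorem finite_primes_over (F : Type*) [Field F] [NumberField F] (v : HeightOneSpectrum (𝓞 F))
    (E : Type*) [Field E] [NumberField E] [Algebra F E] :
    Finite {w : HeightOneSpectrum (𝓞 E) //
      w.asIdeal.comap (algebraMap (𝓞 F) (𝓞 E)) = v.asIdeal} := by
  have hinj : Function.Injective (algebraMap (𝓞 F) (𝓞 E)) := by
    intro x y h
    have h2 : algebraMap (𝓞 F) E x = algebraMap (𝓞 F) E y := by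
      rw [IsScalarTower.algebraMap_eq (𝓞 F) (𝓞 E) E, RingHom.comp_apply, RingHom.comp_apply, h]
    exact (FaithfulSMul.algebraMap_injective (𝓞 F) E) h2
  have hne : Ideal.map (algebraMap (𝓞 F) (𝓞 E)) v.asIdeal ≠ 0 := by
    intro h0
    obtain ⟨x, hx, hxne⟩ := Submodule.exists_mem_ne_zero_of_ne_bot v.ne_bot
    have : algebraMap (𝓞 F) (𝓞 E) x = 0 := by
      have := Ideal.mem_map_of_mem (algebraMap (𝓞 F) (𝓞 E)) hx
      rw [h0] at this
      simpa using this
    exact hxne (hinj (by simpa using this))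
  have hfin := Ideal.finite_factors hne
  have hsub : {w : HeightOneSpectrum (𝓞 E) |
      w.asIdeal.comap (algebraMap (𝓞 F) (𝓞 E)) = v.asIdeal}
      ⊆ {w : HeightOneSpectrum (𝓞 E) |
        w.asIdeal ∣ Ideal.map (algebraMap (𝓞 F) (𝓞 E)) v.asIdeal} := by
    intro w hw
    rw [Set.mem_setOf_eq, Ideal.dvd_iff_le, Ideal.map_le_iff_le_comap, hw]
  exact (hfin.subset hsub).to_subtype


/-- Abstract form of the main theorem, for the unit group of a finite product of
complete fields with `ℤᵐ⁰`-valuations. -/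
theorem aux_open_subgroup {ι : Type*} [Finite ι] {κ : ι → Type*} [∀ i, Finite (κ i)]
    (K : ∀ i, κ i → Type*) [∀ i j, Field (K i j)] [∀ i j, Valued (K i j) ℤᵐ⁰]
    [∀ i j, CompleteSpace (K i j)]
    {m l k : ℕ} (hm : 1 ≤ m) (hmlk : m = l * k)
    (hmK : ∀ i j, (m : K i j) ≠ 0)
    (T : Type*) [CommGroup T] [TopologicalSpace T] [IsTopologicalGroup T]
    (ν : (∀ i, ∀ j, K i j)ˣ →* T) (μ : T →* (∀ i, ∀ j, K i j)ˣ)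
    (hν : Continuous ν) (hμ : Continuous μ)
    (hcomp : ∀ t : T, ν (μ t) = t ^ l)
    (C : Subgroup (∀ i, ∀ j, K i j)ˣ)
    (U : Set (∀ i, ∀ j, K i j)ˣ) (hUopen : IsOpen U)
    (hUC : (C : Set (∀ i, ∀ j, K i j)ˣ) = U ∩ (ν.ker : Set _)) :
    IsOpen ((C ⊔ Subgroup.map (μ.comp (powMonoidHom k)) ⊤ :
      Subgroup (∀ i, ∀ j, K i j)ˣ) : Set (∀ i, ∀ j, K i j)ˣ) := by
  classical
  set R := ∀ i, ∀ j, K i j with hR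
  have hU1 : (1 : Rˣ) ∈ U := by
    have h1C : (1 : Rˣ) ∈ (C : Set Rˣ) := C.one_mem
    rw [hUC] at h1C
    exact h1C.1
  -- the auxiliary continuous map
  set f : Rˣ → Rˣ := fun g => g ^ m * (μ ((ν g) ^ k))⁻¹ with hfdef
  have hf1 : f 1 = 1 := by simp [hfdef]
  have hfcont : Continuous f :=
    (continuous_pow m).mul ((hμ.comp ((continuous_pow k).comp hν)).inv)
  have hfker : ∀ g, f g ∈ ν.ker := by
    intro g
    rw [MonoidHom.mem_ker, hfdef]
    simp only [map_mul, map_pow, map_inv, hcomp]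
    rw [← pow_mul, ← hmlk]
    exact mul_inv_cancel _
  have hW : f ⁻¹' U ∈ 𝓝 (1 : Rˣ) :=
    hfcont.continuousAt.preimage_mem_nhds (by rw [hf1]; exact hUopen.mem_nhds hU1)
  obtain ⟨A, B, hA, hB, hABW⟩ := units_nhds_decomp hW
  -- decompose A ∩ B into valuation balls
  have hAB : A ∩ B ∈ 𝓝 (1 : R) := inter_mem hA hB
  have hdecomp : ∃ δ : ∀ i, κ i → ℤᵐ⁰ˣ,
      {x : R | ∀ i j, Valued.v (x i j - 1) < (δ i j : ℤᵐ⁰)} ⊆ A ∩ B := by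
    rw [nhds_pi, Filter.mem_pi] at hAB
    obtain ⟨I, hIfin, tt, htt, hsub⟩ := hAB
    have h2 : ∀ i, ∃ tt' : ∀ j : κ i, Set (K i j),
        (∀ j, tt' j ∈ 𝓝 (1 : K i j)) ∧ Set.univ.pi tt' ⊆ tt i := by
      intro i
      have hti := htt i
      rw [nhds_pi, Filter.mem_pi] at hti
      obtain ⟨I', hI'fin, t', ht', hsub'⟩ := hti
      exact ⟨t', ht', fun x hx => hsub' (fun j _ => hx j (Set.mem_univ j))⟩
    choose tt' htt' hsub' using h2
    have h3 : ∀ i (j : κ i), ∃ γ : ℤᵐ⁰ˣ,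
        {y : K i j | Valued.v (y - 1) < (γ : ℤᵐ⁰)} ⊆ tt' i j :=
      fun i j => zm_exists_of_mem_nhds (htt' i j)
    choose δ hδ using h3
    refine ⟨δ, fun x hx => ?_⟩
    apply hsub
    intro i _
    apply hsub' i
    intro j _
    exact hδ i j (hx i j)
  obtain ⟨δ, hδsub⟩ := hdecomp
  -- per-coordinate constants
  have hM0 : ∀ i (j : κ i), (Valued.v ((m : K i j))) ≠ 0 :=
    fun i j => Valued.v.ne_zero_iff.mpr (hmK i j)
  have hεpos : ∀ i (j : κ i),
      (min (Valued.v ((m : K i j)) * Valued.v ((m : K i j)))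
        (min ((δ i j : ℤᵐ⁰)) 1 * Valued.v ((m : K i j)))) ≠ 0 := by
    intro i j
    refine zero_lt_iff.mp (lt_min (zero_lt_iff.mpr (mul_ne_zero (hM0 i j) (hM0 i j)))
      (zero_lt_iff.mpr (mul_ne_zero ?_ (hM0 i j))))
    exact zero_lt_iff.mp (lt_min (zero_lt_iff.mpr (δ i j).ne_zero) zero_lt_one)
  -- the candidate neighborhood
  set Vset : Set R :=
    {x | ∀ i j, Valued.v (x i j - 1) <
      min (Valued.v ((m : K i j)) * Valued.v ((m : K i j)))
        (min ((δ i j : ℤᵐ⁰)) 1 * Valued.v ((m : K i j)))} with hVsetdef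
  have hVset : Vset ∈ 𝓝 (1 : R) := by
    have heq : Vset = ⋂ i, ⋂ j, (fun x : R => x i j) ⁻¹'
        {y : K i j | Valued.v (y - 1) <
          min (Valued.v ((m : K i j)) * Valued.v ((m : K i j)))
            (min ((δ i j : ℤᵐ⁰)) 1 * Valued.v ((m : K i j)))} := by
      ext x
      simp only [hVsetdef, Set.mem_setOf_eq, Set.mem_iInter, Set.mem_preimage]
    rw [heq]
    refine Filter.iInter_mem.mpr fun i => Filter.iInter_mem.mpr fun j => ?_
    refine ContinuousAt.preimage_mem_nhds
      (((continuous_apply j).comp (continuous_apply i)).continuousAt) ?_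
    rw [show (1 : R) i j = (1 : K i j) from rfl]
    exact zm_ball_mem_nhds _ (hεpos i j)
  have hV : Units.val ⁻¹' Vset ∈ 𝓝 (1 : Rˣ) :=
    Units.continuous_val.continuousAt.preimage_mem_nhds hVset
  -- the preimage is contained in the subgroup
  refine Subgroup.isOpen_of_mem_nhds _ (Filter.mem_of_superset hV ?_)
  intro u hu
  -- coordinates of u are nonzero
  have hunz : ∀ i (j : κ i), ((u : R) i j) ≠ 0 := by
    intro i j
    have h1 : (u : R) * ((u⁻¹ : Rˣ) : R) = 1 := u.mul_inv
    have h2 := congrFun (congrFun h1 i) j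
    simp only [Pi.mul_apply, Pi.one_apply] at h2
    exact left_ne_zero_of_mul_eq_one h2
  -- Hensel roots at each coordinate
  have hroots : ∀ i (j : κ i), ∃ g : K i j,
      g ^ m = (u : R) i j ∧ Valued.v (g - 1) < min ((δ i j : ℤᵐ⁰)) 1 := by
    intro i j
    have hui := hu i j
    have hlt1 : Valued.v ((u : R) i j - 1)
        < Valued.v ((m : K i j)) * Valued.v ((m : K i j)) :=
      lt_of_lt_of_le hui (min_le_left _ _)
    have hlt2 : Valued.v ((u : R) i j - 1)
        < min ((δ i j : ℤᵐ⁰)) 1 * Valued.v ((m : K i j)) :=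
      lt_of_lt_of_le hui (min_le_right _ _)
    obtain ⟨g, hg1, hg2⟩ := hensel_pow_root hm (hmK i j) hlt1
    refine ⟨g, hg1, lt_of_le_of_lt hg2 ?_⟩
    rw [div_lt_iff₀ (zero_lt_iff.mpr (hM0 i j))]
    exact hlt2
  choose gg hgg1 hgg2 using hroots
  have hGnz : ∀ i (j : κ i), gg i j ≠ 0 := by
    intro i j h0
    apply hunz i j
    rw [← hgg1 i j, h0, zero_pow (Nat.one_le_iff_ne_zero.mp hm)]
  -- the root as a unit
  set gU : Rˣ :=
    ⟨fun i j => gg i j, fun i j => (gg i j)⁻¹,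
      by funext i j; exact mul_inv_cancel₀ (hGnz i j),
      by funext i j; exact inv_mul_cancel₀ (hGnz i j)⟩ with hgUdef
  have hgUm : gU ^ m = u := by
    apply Units.ext
    rw [Units.val_pow_eq_pow_val]
    funext i j
    have h' : ((gU : R) ^ m) i j = (gg i j) ^ m := rfl
    rw [h', hgg1]
  -- gU lands in the preimage of U
  have hd1 : ∀ i (j : κ i), Valued.v ((gU : R) i j - 1) < (δ i j : ℤᵐ⁰) :=
    fun i j => lt_of_lt_of_le (hgg2 i j) (min_le_left _ _)
  have hd2 : ∀ i (j : κ i), Valued.v ((gU : R) i j - 1) < 1 :=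
    fun i j => lt_of_lt_of_le (hgg2 i j) (min_le_right _ _)
  have hgA : (gU : R) ∈ A := (hδsub (fun i j => hd1 i j)).1
  have hgB : ((gU⁻¹ : Rˣ) : R) ∈ B := by
    refine (hδsub ?_).2
    intro i j
    have heq : ((gU⁻¹ : Rˣ) : R) i j = (gg i j)⁻¹ := rfl
    rw [heq, val_inv_sub_one (hd2 i j)]
    exact hd1 i j
  have hgW : gU ∈ f ⁻¹' U := hABW gU hgA hgB
  -- conclude
  have hc : f gU ∈ C := by
    have h' : f gU ∈ (C : Set Rˣ) := by
      rw [hUC]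
      exact ⟨hgW, hfker gU⟩
    exact h'
  have hmu : μ ((ν gU) ^ k) ∈ Subgroup.map (μ.comp (powMonoidHom k)) ⊤ :=
    ⟨ν gU, Subgroup.mem_top _, rfl⟩
  have hufact : u = f gU * μ ((ν gU) ^ k) := by
    rw [hfdef]
    simp only
    rw [inv_mul_cancel_right, hgUm]
  show u ∈ (C ⊔ Subgroup.map (μ.comp (powMonoidHom k)) ⊤ : Subgroup Rˣ)
  rw [hufact]
  exact Subgroup.mul_mem _ (Subgroup.mem_sup_left hc) (Subgroup.mem_sup_right hmu)

end Helpers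

/-- The group `∏₁ⁿ E_𝔭^×`: the unit group of `∏₁ⁿ E ⊗_F F_𝔭`, where
`E ⊗_F F_𝔭 ≅ ∏_{w ∣ 𝔭} E_w` is the product of the completions of `E` at the places
above `𝔭`, with its `𝔭`-adic topology. -/
abbrev LocalUnitsProd (F : Type*) [Field F] [NumberField F]
    (v : IsDedekindDomain.HeightOneSpectrum (𝓞 F))
    (E : Type*) [Field E] [NumberField E] [Algebra F E] (n : ℕ) : Type _ :=
  (Fin n → ∀ w : {w : HeightOneSpectrum (𝓞 E) //
      w.asIdeal.comap (algebraMap (𝓞 F) (𝓞 E)) = v.asIdeal},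
      (w.1.adicCompletion E))ˣ

/-- Let `F` be a number field, `E/F` a finite extension, `𝔭` a finite place
of `F` and `l, k` positive integers.  Suppose `ν : ∏₁ⁿ E_𝔭^× → T(F_𝔭)` and
`μ : T(F_𝔭) → ∏₁ⁿ E_𝔭^×` are continuous group homomorphisms with `ν ∘ μ = [l]`
(the `l`-th power map), and `C` is an open subgroup of `ker ν`.  Then
`C · μ([k]T(F_𝔭))` is an open subgroup of `∏₁ⁿ E_𝔭^×` for the `𝔭`-adic topology. -/
theorem open_subgroup_from_kernel_and_powers
    (F : Type*) [Field F] [NumberField F] (v : HeightOneSpectrum (𝓞 F))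
    (E : Type*) [Field E] [NumberField E] [Algebra F E] [FiniteDimensional F E]
    (n : ℕ) (l k : ℕ) (hl : 0 < l) (hk : 0 < k)
    (T : Type*) [CommGroup T] [TopologicalSpace T] [IsTopologicalGroup T]
    (ν : LocalUnitsProd F v E n →* T) (μ : T →* LocalUnitsProd F v E n)
    (hν : Continuous ν) (hμ : Continuous μ)
    (hcomp : ∀ t : T, ν (μ t) = t ^ l)
    (C : Subgroup (LocalUnitsProd F v E n)) (hCker : C ≤ ν.ker)
    (hCopen : ∃ U : Set (LocalUnitsProd F v E n),
      IsOpen U ∧ (C : Set (LocalUnitsProd F v E n)) = U ∩ (ν.ker : Set _)) :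
    IsOpen ((C ⊔ Subgroup.map (μ.comp (powMonoidHom k)) ⊤ :
      Subgroup (LocalUnitsProd F v E n)) : Set (LocalUnitsProd F v E n)) := by
  haveI hJfin : Finite {w : HeightOneSpectrum (𝓞 E) //
      w.asIdeal.comap (algebraMap (𝓞 F) (𝓞 E)) = v.asIdeal} := finite_primes_over F v E
  obtain ⟨U, hUopen, hUC⟩ := hCopen
  refine aux_open_subgroup
    (fun (_ : Fin n) (w : {w : HeightOneSpectrum (𝓞 E) //
      w.asIdeal.comap (algebraMap (𝓞 F) (𝓞 E)) = v.asIdeal}) => w.1.adicCompletion E)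
    (Nat.one_le_iff_ne_zero.mpr (Nat.mul_ne_zero hl.ne' hk.ne')) rfl
    (fun i w => ?_) T ν μ hν hμ hcomp C U hUopen hUC
  haveI : CharZero (w.1.adicCompletion E) :=
    (RingHom.charZero_iff ((algebraMap E (w.1.adicCompletion E)).injective)).mp inferInstance
  exact Nat.cast_ne_zero.mpr (Nat.mul_ne_zero hl.ne' hk.ne')
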